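/- arXiv:2410.11058 — 2 statements merged into one kernel-verified Lean document; each statement's English description precedes it below -/
import Mathlib

section
/- Let U ⊆ ℂ be open, ε > 0, and K compact with {z : dist(z,K) ≤ ε} ⊆ U. If γ₀ and γ₁ are closed piecewise C¹ paths on [a,b] with image contained in K such that |γ₀(t) − γ₁(t)| ≤ ε/2 for all t ∈ [a,b], then ∮_{γ₀} f(z) dz = ∮_{γ₁} f(z) dz for every function f holomorphic on U. -/
open Set intervalIntegral

def PiecewiseC1On (γ : ℝ → ℂ) (a b : ℝ) : Prop :=
  ContinuousOn γ (Set.Icc a b) ∧ ∃ n : ℕ, ∃ p : ℕ → ℝ, 0 < n ∧ p 0 = a ∧ p n = b ∧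
    (∀ i < n, p i < p (i + 1)) ∧ ∀ i < n, ContDiffOn ℝ 1 γ (Set.Icc (p i) (p (i + 1)))

open Metric MeasureTheory

lemma exists_primitive_ball {f : ℂ → ℂ} {c : ℂ} {R : NNReal} (hR : 0 < R)
    (hf : DifferentiableOn ℂ f (Metric.closedBall c R)) :
    ∃ F : ℂ → ℂ, ∀ z ∈ Metric.ball c (R : ℝ), HasDerivAt F (f z) z := by
  have hp := hf.hasFPowerSeriesOnBall hR
  set p := cauchyPowerSeries f c R with hpdef
  refine ⟨fun w => ∑' n, (p.coeff n / (n + 1)) * (w - c) ^ (n + 1), fun z hz => ?_⟩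
  obtain ⟨r'', h1, h2⟩ := exists_between (Metric.mem_ball.1 hz)
  set r' : NNReal := ⟨r'', dist_nonneg.trans h1.le⟩ with hr'def
  have hr'R : (r' : ℝ) < R := h2
  have hrad : (r' : ENNReal) < p.radius := by
    refine lt_of_lt_of_le ?_ hp.r_le
    exact_mod_cast ENNReal.coe_lt_coe.2 (by exact_mod_cast hr'R)
  have hsum : Summable fun n => ‖p.coeff n‖ * (r' : ℝ) ^ n := by
    have := p.summable_norm_mul_pow hrad
    simpa [FormalMultilinearSeries.norm_apply_eq_norm_coef] using this
  have key : HasDerivAt (fun w => ∑' n, (p.coeff n / (n + 1)) * (w - c) ^ (n + 1))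
      (∑' n, p.coeff n * (z - c) ^ n) z := by
    apply hasDerivAt_tsum_of_isPreconnected hsum (Metric.isOpen_ball (x := c) (ε := (r' : ℝ)))
      (convex_ball c (r' : ℝ)).isPreconnected
      (g := fun n w => (p.coeff n / (n + 1)) * (w - c) ^ (n + 1))
      (g' := fun n w => p.coeff n * (w - c) ^ n)
      (y₀ := c)
    · intro n y _
      have h1 : HasDerivAt (fun w : ℂ => (w - c) ^ (n + 1))
          ((n + 1 : ℕ) * (y - c) ^ n * 1) y := by
        simpa using (HasDerivAt.fun_pow ((hasDerivAt_id y).sub_const c) (n + 1))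
      have := h1.const_mul (p.coeff n / (n + 1))
      convert this using 1
      · rfl
      have hne : ((n : ℂ) + 1) ≠ 0 := Nat.cast_add_one_ne_zero n
      push_cast
      field_simp
    · intro n y hy
      calc ‖p.coeff n * (y - c) ^ n‖ = ‖p.coeff n‖ * ‖y - c‖ ^ n := by rw [norm_mul, norm_pow]
        _ ≤ ‖p.coeff n‖ * (r' : ℝ) ^ n := by
            gcongr
            exact le_of_lt (by simpa [dist_eq_norm] using hy)
    · exact Metric.mem_ball_self (lt_of_le_of_lt dist_nonneg h1)
    · apply Summable.congr summable_zero
      intro n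
      simp
    · exact Metric.mem_ball.2 h1
  convert key using 1
  have hmem : z - c ∈ Metric.eball (0 : ℂ) R := by
    rw [EMetric.mem_ball, edist_zero_right]
    exact_mod_cast (by rw [← NNReal.coe_lt_coe, coe_nnnorm]; simpa [dist_eq_norm] using hz : ‖z - c‖₊ < R)
  have := hp.hasSum (y := z - c) hmem
  simp only [FormalMultilinearSeries.apply_eq_pow_smul_coeff, smul_eq_mul] at this
  rw [add_sub_cancel] at this
  rw [← this.tsum_eq]
  exact tsum_congr fun n => by ring

lemma piece_ftc {f F : ℂ → ℂ} {γ : ℝ → ℂ} {c d : ℝ} (hcd : c ≤ d)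
    (hγ : ContDiffOn ℝ 1 γ (Icc c d)) {s : Set ℂ}
    (hfc : ContinuousOn f s)
    (hF : ∀ z ∈ s, HasDerivAt F (f z) z)
    (himg : ∀ t ∈ Icc c d, γ t ∈ s) :
    IntervalIntegrable (fun t => f (γ t) * deriv γ t) volume c d ∧
      ∫ t in c..d, f (γ t) * deriv γ t = F (γ d) - F (γ c) := by
  rcases eq_or_lt_of_le hcd with rfl | hlt
  · simp
  have hud : UniqueDiffOn ℝ (Icc c d) := uniqueDiffOn_Icc hlt
  -- continuous "within" version of the integrand
  have hφ : ContinuousOn (fun t => f (γ t) * derivWithin γ (Icc c d) t) (Icc c d) := by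
    apply ContinuousOn.mul
    · exact hfc.comp hγ.continuousOn himg
    · exact hγ.continuousOn_derivWithin hud le_rfl
  have hφint : IntervalIntegrable (fun t => f (γ t) * derivWithin γ (Icc c d) t) volume c d :=
    (by rwa [uIcc_of_le hcd] : ContinuousOn _ (uIcc c d)).intervalIntegrable
  have heq : ∀ t ∈ Ioo c d, deriv γ t = derivWithin γ (Icc c d) t := fun t ht =>
    (derivWithin_of_mem_nhds (Icc_mem_nhds ht.1 ht.2)).symm
  have hψint : IntervalIntegrable (fun t => f (γ t) * deriv γ t) volume c d := by
    rw [intervalIntegrable_iff_integrableOn_Ioo_of_le hcd]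
    have := (intervalIntegrable_iff_integrableOn_Ioo_of_le hcd).1 hφint
    exact this.congr_fun (fun t ht => by rw [heq t ht]) measurableSet_Ioo
  refine ⟨hψint, ?_⟩
  have hFc : ContinuousOn F s := fun z hz => ((hF z hz).differentiableAt.continuousAt).continuousWithinAt
  have hg : ContinuousOn (F ∘ γ) (Icc c d) := hFc.comp hγ.continuousOn himg
  have hderiv : ∀ t ∈ Ioo c d, HasDerivAt (F ∘ γ) (f (γ t) * deriv γ t) t := by
    intro t ht
    have hγt : HasDerivAt γ (deriv γ t) t :=
      ((hγ.contDiffAt (Icc_mem_nhds ht.1 ht.2)).differentiableAt one_ne_zero).hasDerivAt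
    have hFz := hF (γ t) (himg t (Ioo_subset_Icc_self ht))
    have := HasDerivAt.scomp t hFz hγt
    simpa [mul_comm, smul_eq_mul] using this
  exact integral_eq_sub_of_hasDerivAt_of_le hcd hg hderiv hψint

lemma piecewise_ftc {f F : ℂ → ℂ} {γ : ℝ → ℂ} {a b c d : ℝ}
    (h : PiecewiseC1On γ a b) (hac : a ≤ c) (hcd : c ≤ d) (hdb : d ≤ b)
    {s : Set ℂ} (hfc : ContinuousOn f s)
    (hF : ∀ z ∈ s, HasDerivAt F (f z) z)
    (himg : ∀ t ∈ Icc c d, γ t ∈ s) :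
    IntervalIntegrable (fun t => f (γ t) * deriv γ t) volume c d ∧
      ∫ t in c..d, f (γ t) * deriv γ t = F (γ d) - F (γ c) := by
  obtain ⟨-, n, p, hn, hp0, hpn, hmono, hC1⟩ := h
  set m : ℕ → ℝ := fun i => max c (min d (p i)) with hm
  have hm0 : m 0 = c := by
    simp only [hm, hp0]
    rw [min_eq_right (hac.trans hcd), max_eq_left hac]
  have hmn : m n = d := by
    simp only [hm, hpn]
    rw [min_eq_left hdb, max_eq_right hcd]
  have hmle : ∀ i, c ≤ m i ∧ m i ≤ d := fun i =>
    ⟨le_max_left _ _, max_le hcd (min_le_left _ _)⟩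
  have hpieces : ∀ i < n,
      IntervalIntegrable (fun t => f (γ t) * deriv γ t) volume (m i) (m (i + 1)) ∧
      ∫ t in (m i)..(m (i + 1)), f (γ t) * deriv γ t = F (γ (m (i + 1))) - F (γ (m i)) := by
    intro i hi
    have hple := (hmono i hi).le
    have hmm : m i ≤ m (i + 1) := by simp only [hm]; gcongr
    rcases eq_or_lt_of_le hmm with heq | hlt
    · rw [← heq]; simp
    · have hA : p i ≤ d := by
        by_contra hpd
        push_neg at hpd
        have e1 : m i = max c d := by
          simp only [hm]; rw [min_eq_left hpd.le]
        have e2 : m (i + 1) = max c d := by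
          simp only [hm]; rw [min_eq_left (hpd.le.trans hple)]
        rw [e1, e2] at hlt; exact lt_irrefl _ hlt
      have hB : c ≤ p (i + 1) := by
        by_contra hpc
        push_neg at hpc
        have e1 : m i = c := by
          simp only [hm]
          rw [max_eq_left ((min_le_right _ _).trans (hple.trans hpc.le))]
        have e2 : m (i + 1) = c := by
          simp only [hm]
          rw [max_eq_left ((min_le_right _ _).trans hpc.le)]
        rw [e1, e2] at hlt; exact lt_irrefl _ hlt
      have hlow : p i ≤ m i := by
        simp only [hm]; rw [min_eq_right hA]; exact le_max_right _ _
      have hhigh : m (i + 1) ≤ p (i + 1) := by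
        simp only [hm]; exact max_le hB (min_le_right _ _)
      have hsub : Icc (m i) (m (i + 1)) ⊆ Icc (p i) (p (i + 1)) := Icc_subset_Icc hlow hhigh
      have hsub2 : Icc (m i) (m (i + 1)) ⊆ Icc c d :=
        Icc_subset_Icc (hmle i).1 (hmle (i + 1)).2
      exact piece_ftc hlt.le ((hC1 i hi).mono hsub) hfc hF fun t ht => himg t (hsub2 ht)
  have hint : ∀ k < n, IntervalIntegrable (fun t => f (γ t) * deriv γ t) volume (m k) (m (k + 1)) :=
    fun k hk => (hpieces k hk).1
  constructor
  · have := IntervalIntegrable.trans_iterate hint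
    rwa [hm0, hmn] at this
  · have hsum := sum_integral_adjacent_intervals hint
    rw [hm0, hmn] at hsum
    rw [← hsum, Finset.sum_congr rfl fun i hi => (hpieces i (Finset.mem_range.1 hi)).2,
      Finset.sum_range_sub (fun i => F (γ (m i))) n, hm0, hmn]

lemma seg_eq {f F : ℂ → ℂ} {s : Set ℂ} (hfc : ContinuousOn f s)
    (hF : ∀ z ∈ s, HasDerivAt F (f z) z) {z w : ℂ} (hseg : segment ℝ z w ⊆ s) :
    F w - F z = ∫ t in (0:ℝ)..1, f (z + t • (w - z)) * (w - z) := by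
  set γ : ℝ → ℂ := fun t => z + t • (w - z) with hγdef
  have hd : ∀ t : ℝ, HasDerivAt γ (w - z) t := by
    intro t
    simpa [hγdef] using ((hasDerivAt_id t).smul_const (w - z)).const_add z
  have hγc : ContDiffOn ℝ 1 γ (Icc 0 1) :=
    (contDiff_const.add (contDiff_id.smul contDiff_const)).contDiffOn
  have himg : ∀ t ∈ Icc (0:ℝ) 1, γ t ∈ s := by
    intro t ht
    apply hseg
    rw [segment_eq_image']
    exact ⟨t, ht, rfl⟩
  have h := (piece_ftc zero_le_one hγc hfc hF himg).2
  have h01 : γ 1 = w := by simp [hγdef]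
  have h00 : γ 0 = z := by simp [hγdef]
  rw [h01, h00] at h
  rw [← h]
  simp only [show deriv γ = fun _ => w - z from funext fun t => (hd t).deriv]
  rfl

theorem bishop_close_paths (U : Set ℂ) (hU : IsOpen U) (ε : ℝ) (hε : 0 < ε)
    (K : Set ℂ) (hK : IsCompact K) (hKU : {z : ℂ | Metric.infDist z K ≤ ε} ⊆ U)
    (a b : ℝ) (hab : a < b) (γ₀ γ₁ : ℝ → ℂ)
    (h₀ : PiecewiseC1On γ₀ a b) (h₁ : PiecewiseC1On γ₁ a b)
    (hc₀ : γ₀ a = γ₀ b) (hc₁ : γ₁ a = γ₁ b)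
    (hK₀ : ∀ t ∈ Icc a b, γ₀ t ∈ K) (hK₁ : ∀ t ∈ Icc a b, γ₁ t ∈ K)
    (hclose : ∀ t ∈ Icc a b, ‖γ₀ t - γ₁ t‖ ≤ ε / 2)
    (f : ℂ → ℂ) (hf : DifferentiableOn ℂ f U) :
    ∫ t in a..b, f (γ₀ t) * deriv γ₀ t = ∫ t in a..b, f (γ₁ t) * deriv γ₁ t := by
  -- uniform continuity of γ₀
  obtain ⟨δ, hδ, hδ'⟩ := Metric.uniformContinuousOn_iff.1
    (isCompact_Icc.uniformContinuousOn_of_continuous h₀.1) (ε / 8) (by linarith)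
  obtain ⟨N, hN⟩ := exists_nat_gt ((b - a) / δ)
  have hba : 0 < b - a := by linarith
  have hN0 : 0 < (N : ℝ) := lt_trans (div_pos hba hδ) hN
  have hNne : (N : ℝ) ≠ 0 := ne_of_gt hN0
  have hmesh : (b - a) / N < δ := by
    rw [div_lt_iff₀ hN0]
    rw [div_lt_iff₀ hδ] at hN
    linarith
  have hstep0 : 0 ≤ (b - a) / N := le_of_lt (div_pos hba hN0)
  set q : ℕ → ℝ := fun k => a + k * ((b - a) / N) with hq
  clear_value q
  have hq0 : q 0 = a := by simp [hq]
  have hqN : q N = b := by simp only [hq]; field_simp; ring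
  have hqmono : ∀ k l : ℕ, k ≤ l → q k ≤ q l := by
    intro k l hkl
    simp only [hq]
    have : (k : ℝ) ≤ l := Nat.cast_le.2 hkl
    nlinarith
  have hqmem : ∀ k ≤ N, q k ∈ Icc a b := by
    intro k hk
    constructor
    · rw [← hq0]; exact hqmono 0 k (Nat.zero_le k)
    · rw [← hqN]; exact hqmono k N hk
  -- the segment integral function
  set Lf : ℝ → ℂ := fun u =>
    ∫ t in (0:ℝ)..1, f (γ₁ u + t • (γ₀ u - γ₁ u)) * (γ₀ u - γ₁ u) with hLf
  clear_value Lf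
  have key : ∀ k < N,
      (IntervalIntegrable (fun t => f (γ₀ t) * deriv γ₀ t) volume (q k) (q (k+1)) ∧
       IntervalIntegrable (fun t => f (γ₁ t) * deriv γ₁ t) volume (q k) (q (k+1))) ∧
      (∫ t in q k..q (k+1), f (γ₀ t) * deriv γ₀ t) -
        (∫ t in q k..q (k+1), f (γ₁ t) * deriv γ₁ t) = Lf (q (k+1)) - Lf (q k) := by
    intro k hk
    have hk1 : k + 1 ≤ N := hk
    have hqk : q k ∈ Icc a b := hqmem k (le_of_lt hk)
    have hqk1 : q (k+1) ∈ Icc a b := hqmem (k+1) hk1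
    have hkk1 : q k ≤ q (k+1) := hqmono k (k+1) (Nat.le_succ k)
    set z := γ₀ (q k) with hz
    have hzK : z ∈ K := hK₀ _ hqk
    have hsubU : Metric.ball z (7 * ε / 8) ⊆ U := by
      intro w hw
      apply hKU
      refine le_trans (Metric.infDist_le_dist_of_mem hzK) ?_
      have := Metric.mem_ball.1 hw
      linarith
    have hicc : ∀ t ∈ Icc (q k) (q (k+1)), t ∈ Icc a b := fun t ht =>
      ⟨hqk.1.trans ht.1, ht.2.trans hqk1.2⟩
    have hd₀ : ∀ t ∈ Icc (q k) (q (k+1)), dist (γ₀ t) z < ε / 8 := by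
      intro t ht
      have hstep : q (k+1) - q k = (b - a) / N := by simp [hq]; ring
      have hdt : dist t (q k) < δ := by
        rw [Real.dist_eq, abs_of_nonneg (by linarith [ht.1])]
        have h2 : t ≤ q (k+1) := ht.2
        linarith [hmesh, hstep]
      exact hδ' t (hicc t ht) (q k) hqk hdt
    have himg₀ : ∀ t ∈ Icc (q k) (q (k+1)), γ₀ t ∈ Metric.ball z (7 * ε / 8) := by
      intro t ht
      rw [Metric.mem_ball]
      calc dist (γ₀ t) z < ε / 8 := hd₀ t ht
        _ ≤ 7 * ε / 8 := by linarith
    have himg₁ : ∀ t ∈ Icc (q k) (q (k+1)), γ₁ t ∈ Metric.ball z (7 * ε / 8) := by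
      intro t ht
      have h1 : dist (γ₁ t) (γ₀ t) ≤ ε / 2 := by
        rw [dist_eq_norm, norm_sub_rev]
        exact hclose t (hicc t ht)
      have h2 : dist (γ₀ t) z < ε / 8 := hd₀ t ht
      rw [Metric.mem_ball]
      calc dist (γ₁ t) z ≤ dist (γ₁ t) (γ₀ t) + dist (γ₀ t) z := dist_triangle _ _ _
        _ < 7 * ε / 8 := by linarith
    -- primitive on the ball
    have hR0 : 0 < (⟨7 * ε / 8, by positivity⟩ : NNReal) := by
      apply NNReal.coe_pos.1
      show (0:ℝ) < 7 * ε / 8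
      positivity
    have hfd : DifferentiableOn ℂ f
        (Metric.closedBall z ((⟨7 * ε / 8, by positivity⟩ : NNReal) : ℝ)) := by
      apply hf.mono
      intro w hw
      apply hKU
      refine le_trans (Metric.infDist_le_dist_of_mem hzK) ?_
      have := Metric.mem_closedBall.1 hw
      simp only [NNReal.coe_mk] at this
      linarith
    obtain ⟨F, hF⟩ := exists_primitive_ball hR0 hfd
    change ∀ w ∈ Metric.ball z (7 * ε / 8), HasDerivAt F (f w) w at hF
    have hfc : ContinuousOn f (Metric.ball z (7 * ε / 8)) := hf.continuousOn.mono hsubU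
    have A₀ := piecewise_ftc h₀ hqk.1 hkk1 hqk1.2 hfc hF himg₀
    have A₁ := piecewise_ftc h₁ hqk.1 hkk1 hqk1.2 hfc hF himg₁
    refine ⟨⟨A₀.1, A₁.1⟩, ?_⟩
    rw [A₀.2, A₁.2]
    have hmem_end : ∀ u ∈ ({q k, q (k+1)} : Set ℝ), F (γ₀ u) - F (γ₁ u) = Lf u := by
      intro u hu
      have huI : u ∈ Icc (q k) (q (k+1)) := by
        rcases hu with rfl | hu
        · exact ⟨le_refl _, hkk1⟩
        · rw [mem_singleton_iff] at hu; subst hu; exact ⟨hkk1, le_refl _⟩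
      have hseg : segment ℝ (γ₁ u) (γ₀ u) ⊆ Metric.ball z (7 * ε / 8) :=
        (convex_ball z (7 * ε / 8)).segment_subset (himg₁ u huI) (himg₀ u huI)
      rw [hLf]
      exact seg_eq hfc hF hseg
    have e1 := hmem_end (q k) (by left; rfl)
    have e2 := hmem_end (q (k+1)) (by right; rfl)
    rw [← e1, ← e2]
    ring
  -- assemble
  have hint₀ : ∀ k < N, IntervalIntegrable (fun t => f (γ₀ t) * deriv γ₀ t) volume (q k) (q (k+1)) :=
    fun k hk => (key k hk).1.1
  have hint₁ : ∀ k < N, IntervalIntegrable (fun t => f (γ₁ t) * deriv γ₁ t) volume (q k) (q (k+1)) :=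
    fun k hk => (key k hk).1.2
  have sum₀ := sum_integral_adjacent_intervals hint₀
  have sum₁ := sum_integral_adjacent_intervals hint₁
  rw [hq0, hqN] at sum₀ sum₁
  have htel : ∑ k ∈ Finset.range N, (Lf (q (k+1)) - Lf (q k)) = Lf (q N) - Lf (q 0) :=
    Finset.sum_range_sub (fun k => Lf (q k)) N
  have hLab : Lf (q N) = Lf (q 0) := by
    rw [hq0, hqN]
    simp only [hLf, ← hc₀, ← hc₁]
  have : (∫ t in a..b, f (γ₀ t) * deriv γ₀ t) - (∫ t in a..b, f (γ₁ t) * deriv γ₁ t) = 0 := by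
    rw [← sum₀, ← sum₁, ← Finset.sum_sub_distrib]
    rw [Finset.sum_congr rfl fun k hk => (key k (Finset.mem_range.1 hk)).2]
    rw [htel, hLab, sub_self]
  exact sub_eq_zero.1 this
end

section
/- Let U ⊆ ℂ be open and let γ₀, γ₁ : [0,1] → ℂ be closed piecewise C¹ paths that are homotopic through closed paths inside a compact set K with K ⊆ U (more precisely, there is r > 0 with {z : dist(z,K) ≤ r} ⊆ U). Then ∮_{γ₀} f(z) dz = ∮_{γ₁} f(z) dz for every function f holomorphic on U. -/
open Set intervalIntegral
open MeasureTheory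

lemma exists_primitive {f : ℂ → ℂ} {c : ℂ} {r : ℝ} (hr : 0 < r)
    (hf : DifferentiableOn ℂ f (Metric.closedBall c r)) :
    ∃ F : ℂ → ℂ, ∀ z ∈ Metric.ball c r, HasDerivAt F (f z) z := by
  lift r to NNReal using hr.le with R hR
  have hR0 : 0 < R := by exact_mod_cast hr
  have hps : HasFPowerSeriesOnBall f (cauchyPowerSeries f c R) c R :=
    hf.hasFPowerSeriesOnBall hR0
  set p := cauchyPowerSeries f c R with hp
  set a : ℕ → ℂ := fun n => p.coeff n with ha
  set F : ℂ → ℂ := fun z => ∑' n : ℕ, (a n / (n + 1)) * (z - c) ^ (n + 1) with hF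
  refine ⟨F, fun z₀ hz₀ => ?_⟩
  have h1 : dist z₀ c < (R : ℝ) := by simpa [Metric.mem_ball] using hz₀
  obtain ⟨ρ', hρ'⟩ := exists_between h1
  set ρ : NNReal := ρ'.toNNReal with hρdef
  have hρnn : (0:ℝ) ≤ ρ' := (dist_nonneg).trans hρ'.1.le
  have hρcoe : (ρ : ℝ) = ρ' := Real.coe_toNNReal _ hρnn
  have hρ1 : dist z₀ c < (ρ : ℝ) := by rw [hρcoe]; exact hρ'.1
  have hρ2 : (ρ : ℝ) < (R : ℝ) := by rw [hρcoe]; exact hρ'.2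
  have hballs : Metric.ball c (ρ : ℝ) ⊆ Metric.eball c (R : ENNReal) := by
    rw [Metric.emetric_ball_nnreal]
    exact Metric.ball_subset_ball hρ2.le
  have hsummand : ∀ z ∈ Metric.ball c (ρ : ℝ), Summable (fun n => a n * (z - c) ^ n) := by
    intro z hz
    have hy : z - c ∈ Metric.eball (0 : ℂ) (R : ENNReal) := by
      have h := hballs hz
      rw [EMetric.mem_ball, edist_dist] at h ⊢
      rwa [dist_zero_right, ← dist_eq_norm]
    have hs := (hps.hasSum hy).summable
    refine hs.congr fun n => ?_
    rw [FormalMultilinearSeries.apply_eq_pow_smul_coeff, smul_eq_mul, mul_comm]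
  -- summability of the primitive series
  have hsumF : ∀ z ∈ Metric.ball c (ρ : ℝ),
      Summable (fun n => (a n / (n + 1)) * (z - c) ^ (n + 1)) := by
    intro z hz
    refine Summable.of_norm_bounded (g := fun n => ‖a n * (z - c) ^ n‖ * ‖z - c‖)
      (((hsummand z hz).norm).mul_right _) fun n => ?_
    have hn1 : (1:ℝ) ≤ ‖(n + 1 : ℂ)‖ := by
      rw [show ((n:ℂ) + 1) = ((n + 1 : ℕ) : ℂ) by push_cast; ring, Complex.norm_natCast]
      exact_mod_cast Nat.one_le_iff_ne_zero.2 (Nat.succ_ne_zero n)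
    calc ‖a n / (n + 1) * (z - c) ^ (n + 1)‖
        = ‖a n‖ / ‖(n + 1 : ℂ)‖ * (‖z - c‖ ^ n * ‖z - c‖) := by
          rw [norm_mul, norm_div, norm_pow, pow_succ]
      _ ≤ ‖a n‖ * (‖z - c‖ ^ n * ‖z - c‖) := by
          gcongr
          exact div_le_self (norm_nonneg _) hn1
      _ = ‖a n * (z - c) ^ n‖ * ‖z - c‖ := by rw [norm_mul, norm_pow]; ring
  -- apply uniform limit theorem on the open ball of radius ρ
  have key : ∀ z ∈ Metric.ball c (ρ : ℝ), HasDerivAt F (f z) z := by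
    refine fun z hz => hasDerivAt_of_tendstoUniformlyOn (l := (Filter.atTop : Filter ℕ)) (Metric.isOpen_ball)
      (f' := fun N z => ∑ n ∈ Finset.range N, a n * (z - c) ^ n)
      (f := fun N z => ∑ n ∈ Finset.range N, (a n / (n + 1)) * (z - c) ^ (n + 1))
      ?_ ?_ ?_ hz
    · -- uniform convergence of derivatives
      have := hps.tendstoUniformlyOn' (r' := ρ) (by exact_mod_cast hρ2)
      refine this.congr ?_
      filter_upwards with N z hz
      unfold FormalMultilinearSeries.partialSum
      exact Finset.sum_congr rfl fun n _ => by
        rw [FormalMultilinearSeries.apply_eq_pow_smul_coeff, smul_eq_mul, mul_comm]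
    · -- each partial sum has the right derivative
      filter_upwards with N z hz
      have : ∀ n ∈ Finset.range N, HasDerivAt (fun w => (a n / (n + 1)) * (w - c) ^ (n + 1))
          (a n * (z - c) ^ n) z := by
        intro n _
        have h1 : HasDerivAt (fun w : ℂ => (w - c) ^ (n + 1))
            ((n + 1 : ℕ) * (z - c) ^ n * 1) z :=
          ((hasDerivAt_id z).sub_const c).pow (n + 1)
        have h2 := h1.const_mul (a n / (n + 1))
        have hne : ((n : ℂ) + 1) ≠ 0 := Nat.cast_add_one_ne_zero n
        rw [Nat.cast_add_one, mul_one, ← mul_assoc, div_mul_cancel₀ _ hne] at h2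
        exact h2
      simpa using HasDerivAt.fun_sum this
    · -- pointwise convergence to F
      intro z hz
      have := (hsumF z hz).hasSum.tendsto_sum_nat
      simpa [hF] using this
  exact key z₀ (by rw [Metric.mem_ball]; exact hρ1)

noncomputable def segInt (f : ℂ → ℂ) (a b : ℂ) : ℂ :=
  ∫ t in (0:ℝ)..1, f (a + (t:ℂ) * (b - a)) * (b - a)

lemma seg_mem_ball {c : ℂ} {r : ℝ} {a b : ℂ} (ha : a ∈ Metric.ball c r)
    (hb : b ∈ Metric.ball c r) {t : ℝ} (ht : t ∈ Set.Icc (0:ℝ) 1) :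
    a + (t:ℂ) * (b - a) ∈ Metric.ball c r := by
  have h := (convex_ball c r) ha hb (by linarith [ht.2] : (0:ℝ) ≤ 1 - t) ht.1 (by ring)
  convert h using 1
  simp only [smul_eq_mul, Complex.real_smul, Complex.ofReal_sub, Complex.ofReal_one]
  ring

lemma segInt_eq_sub {f F : ℂ → ℂ} {c : ℂ} {r : ℝ}
    (hF : ∀ z ∈ Metric.ball c r, HasDerivAt F (f z) z)
    (hfc : ContinuousOn f (Metric.ball c r)) {a b : ℂ}
    (ha : a ∈ Metric.ball c r) (hb : b ∈ Metric.ball c r) :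
    segInt f a b = F b - F a := by
  have key : ∀ t ∈ Set.uIcc (0:ℝ) 1,
      HasDerivAt (fun t : ℝ => F (a + (t:ℂ) * (b - a))) (f (a + (t:ℂ) * (b - a)) * (b - a)) t := by
    intro t ht
    rw [Set.uIcc_of_le (by norm_num : (0:ℝ) ≤ 1)] at ht
    have hmem := seg_mem_ball ha hb ht
    have hin : HasDerivAt (fun w : ℂ => a + w * (b - a)) (b - a) (t : ℂ) := by
      simpa using ((hasDerivAt_id ((t:ℝ) : ℂ)).mul_const (b - a)).const_add a
    have hcomp : HasDerivAt (fun w : ℂ => F (a + w * (b - a)))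
        (f (a + (t:ℂ) * (b - a)) * (b - a)) (t : ℂ) := by
      exact (hF _ hmem).comp (t : ℂ) hin
    exact hcomp.comp_ofReal
  have hcont : ContinuousOn (fun t : ℝ => f (a + (t:ℂ) * (b - a)) * (b - a))
      (Set.uIcc (0:ℝ) 1) := by
    rw [Set.uIcc_of_le (by norm_num : (0:ℝ) ≤ 1)]
    refine ContinuousOn.mul ?_ continuousOn_const
    refine hfc.comp ?_ fun t ht => seg_mem_ball ha hb ht
    fun_prop
  have h := intervalIntegral.integral_eq_sub_of_hasDerivAt key hcont.intervalIntegrable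
  rw [segInt, h]
  norm_num

lemma piece_congr_ae {γ : ℝ → ℂ} {u v : ℝ} (huv : u < v) (f : ℂ → ℂ) :
    ∀ᵐ t : ℝ ∂MeasureTheory.volume, t ∈ Set.Ioo u v →
      f (γ t) * deriv γ t = f (γ t) * derivWithin γ (Set.Icc u v) t := by
  filter_upwards with t ht
  rw [derivWithin_of_mem_nhds (Icc_mem_nhds ht.1 ht.2)]

lemma pieceInt_integrable {f : ℂ → ℂ} {c : ℂ} {r : ℝ}
    (hfc : ContinuousOn f (Metric.ball c r)) {γ : ℝ → ℂ} {u v : ℝ} (huv : u < v)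
    (hγ : ContDiffOn ℝ 1 γ (Set.Icc u v)) (hmaps : ∀ t ∈ Set.Icc u v, γ t ∈ Metric.ball c r) :
    IntervalIntegrable (fun t => f (γ t) * deriv γ t) MeasureTheory.volume u v := by
  have hdw : ContinuousOn (derivWithin γ (Set.Icc u v)) (Set.Icc u v) :=
    hγ.continuousOn_derivWithin (uniqueDiffOn_Icc huv) le_rfl
  have hcont : ContinuousOn (fun t => f (γ t) * derivWithin γ (Set.Icc u v) t) (Set.Icc u v) :=
    (hfc.comp hγ.continuousOn hmaps).mul hdw
  have hint : IntervalIntegrable (fun t => f (γ t) * derivWithin γ (Set.Icc u v) t)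
      MeasureTheory.volume u v :=
    (by rwa [Set.uIcc_of_le huv.le] : ContinuousOn _ (Set.uIcc u v)).intervalIntegrable
  rw [intervalIntegrable_iff_integrableOn_Ioo_of_le huv.le] at hint ⊢
  refine hint.congr_fun (fun t ht => ?_) measurableSet_Ioo
  beta_reduce
  rw [derivWithin_of_mem_nhds (Icc_mem_nhds ht.1 ht.2)]

lemma pieceInt {f F : ℂ → ℂ} {c : ℂ} {r : ℝ}
    (hF : ∀ z ∈ Metric.ball c r, HasDerivAt F (f z) z)
    (hfc : ContinuousOn f (Metric.ball c r)) {γ : ℝ → ℂ} {u v : ℝ} (huv : u < v)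
    (hγ : ContDiffOn ℝ 1 γ (Set.Icc u v)) (hmaps : ∀ t ∈ Set.Icc u v, γ t ∈ Metric.ball c r) :
    ∫ t in u..v, f (γ t) * deriv γ t = F (γ v) - F (γ u) := by
  have hdw : ContinuousOn (derivWithin γ (Set.Icc u v)) (Set.Icc u v) :=
    hγ.continuousOn_derivWithin (uniqueDiffOn_Icc huv) le_rfl
  have hcont : ContinuousOn (fun t => f (γ t) * derivWithin γ (Set.Icc u v) t) (Set.Icc u v) :=
    (hfc.comp hγ.continuousOn hmaps).mul hdw
  have hint : IntervalIntegrable (fun t => f (γ t) * derivWithin γ (Set.Icc u v) t)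
      MeasureTheory.volume u v :=
    (by rwa [Set.uIcc_of_le huv.le] : ContinuousOn _ (Set.uIcc u v)).intervalIntegrable
  have hFγ : ContinuousOn (F ∘ γ) (Set.Icc u v) := by
    refine ContinuousOn.comp (fun z hz => ((hF z hz).continuousAt).continuousWithinAt)
      hγ.continuousOn hmaps
  have hderiv : ∀ t ∈ Set.Ioo u v,
      HasDerivAt (F ∘ γ) (f (γ t) * derivWithin γ (Set.Icc u v) t) t := by
    intro t ht
    have hγt : HasDerivAt γ (deriv γ t) t :=
      ((hγ.contDiffAt (Icc_mem_nhds ht.1 ht.2)).differentiableAt one_ne_zero).hasDerivAt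
    have := (hF (γ t) (hmaps t (Set.Ioo_subset_Icc_self ht))).comp t hγt
    rwa [derivWithin_of_mem_nhds (Icc_mem_nhds ht.1 ht.2)]
  have h1 := intervalIntegral.integral_eq_sub_of_hasDerivAt_of_le huv.le hFγ hderiv hint
  have h2 : ∫ t in u..v, f (γ t) * deriv γ t
      = ∫ t in u..v, f (γ t) * derivWithin γ (Set.Icc u v) t := by
    refine intervalIntegral.integral_congr_ae ?_
    have hne : ∀ᵐ t : ℝ ∂MeasureTheory.volume, t ≠ v := by
      rw [MeasureTheory.ae_iff]
      have : {a : ℝ | ¬a ≠ v} = {v} := by ext t; simp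
      rw [this]
      exact MeasureTheory.measure_singleton (v : ℝ)
    filter_upwards [hne] with t htv ht
    rw [Set.uIoc_of_le huv.le] at ht
    rw [derivWithin_of_mem_nhds (Icc_mem_nhds ht.1 (lt_of_le_of_ne ht.2 htv))]
  rw [h2, h1]
  simp [Function.comp]

lemma part_mono {p : ℕ → ℝ} {n : ℕ} (h : ∀ i < n, p i < p (i + 1)) :
    ∀ i j, i ≤ j → j ≤ n → p i ≤ p j := by
  intro i j hij hjn
  induction j with
  | zero =>
    have : i = 0 := by omega
    subst this; exact le_refl _
  | succ j ih =>
    rcases Nat.eq_or_lt_of_le hij with rfl | hlt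
    · exact le_refl _
    · exact (ih (Nat.lt_succ_iff.mp hlt) (by omega)).trans (h j (by omega)).le

lemma exists_sorted_enum (T : Finset ℝ) (hT0 : (0:ℝ) ∈ T) (hT1 : (1:ℝ) ∈ T)
    (hTsub : ∀ x ∈ T, x ∈ Set.Icc (0:ℝ) 1) :
    ∃ N : ℕ, ∃ s : ℕ → ℝ, 0 < N ∧ s 0 = 0 ∧ s N = 1 ∧
      (∀ k < N, s k < s (k + 1)) ∧ (∀ k ≤ N, s k ∈ T) ∧
      (∀ x ∈ T, ∀ k < N, s k < x → s (k + 1) ≤ x) := by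
  have hcard : 0 < T.card := Finset.card_pos.mpr ⟨0, hT0⟩
  set N := T.card - 1 with hN
  have hN2 : 2 ≤ T.card := Finset.one_lt_card.mpr ⟨0, hT0, 1, hT1, by norm_num⟩
  have hNcard : N + 1 = T.card := by omega
  set e := T.orderIsoOfFin rfl with he
  set s : ℕ → ℝ := fun k => if h : k ≤ N then (e ⟨k, by omega⟩ : ℝ) else 1 with hs
  have hsval : ∀ k (h : k ≤ N), s k = (e ⟨k, by omega⟩ : ℝ) := fun k h => by
    simp only [hs, dif_pos h]
  have hmem : ∀ k ≤ N, s k ∈ T := by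
    intro k hk; rw [hsval k hk]; exact (e ⟨k, by omega⟩).2
  have hlt : ∀ k < N, s k < s (k + 1) := by
    intro k hk
    rw [hsval k (by omega), hsval (k + 1) (by omega)]
    have : (⟨k, by omega⟩ : Fin T.card) < ⟨k + 1, by omega⟩ := by
      simp [Fin.lt_def]
    exact_mod_cast e.strictMono this
  have hsucc : ∀ x ∈ T, ∀ k < N, s k < x → s (k + 1) ≤ x := by
    intro x hx k hk hkx
    set i := e.symm ⟨x, hx⟩ with hi
    have hex : (e i : ℝ) = x := by simp [hi]
    rw [hsval k (by omega)] at hkx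
    have hki : (⟨k, by omega⟩ : Fin T.card) < i := by
      rw [← e.lt_iff_lt]
      exact_mod_cast hkx.trans_eq hex.symm
    have : (⟨k + 1, by omega⟩ : Fin T.card) ≤ i := by
      rw [Fin.le_def]; rw [Fin.lt_def] at hki; simpa using hki
    rw [hsval (k + 1) (by omega)]
    calc (e ⟨k + 1, by omega⟩ : ℝ) ≤ e i := by exact_mod_cast e.monotone this
      _ = x := hex
  have hs0 : s 0 = 0 := by
    refine le_antisymm ?_ (hTsub _ (hmem 0 (by omega))).1
    rw [hsval 0 (by omega)]
    have : (⟨0, by omega⟩ : Fin T.card) ≤ e.symm ⟨0, hT0⟩ := by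
      rw [Fin.le_def]; simp
    calc (e ⟨0, by omega⟩ : ℝ) ≤ e (e.symm ⟨0, hT0⟩) := by exact_mod_cast e.monotone this
      _ = 0 := by simp
  have hsN : s N = 1 := by
    refine le_antisymm (hTsub _ (hmem N (le_refl _))).2 ?_
    rw [hsval N (le_refl _)]
    have : e.symm ⟨1, hT1⟩ ≤ (⟨N, by omega⟩ : Fin T.card) := by
      rw [Fin.le_def]
      have h2 := (e.symm ⟨1, hT1⟩).isLt
      show (e.symm ⟨1, hT1⟩ : ℕ) ≤ N
      omega
    calc (1:ℝ) = e (e.symm ⟨1, hT1⟩) := by simp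
      _ ≤ e ⟨N, by omega⟩ := by exact_mod_cast e.monotone this
  exact ⟨N, s, by omega, hs0, hsN, hlt, hmem, hsucc⟩

lemma side_sum {f : ℂ → ℂ} {U : Set ℂ} (hf : DifferentiableOn ℂ f U)
    {r : ℝ} (hr : 0 < r) {γ : ℝ → ℂ} {N : ℕ} {s : ℕ → ℝ}
    (hs0 : s 0 = 0) (hsN : s N = 1) (hslt : ∀ k < N, s k < s (k + 1))
    (hC1 : ∀ k < N, ContDiffOn ℝ 1 γ (Set.Icc (s k) (s (k + 1))))
    (hball : ∀ k < N, Metric.closedBall (γ (s k)) r ⊆ U)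
    (hclose : ∀ k < N, ∀ t ∈ Set.Icc (s k) (s (k + 1)), dist (γ t) (γ (s k)) < r) :
    ∫ t in (0:ℝ)..1, f (γ t) * deriv γ t
      = ∑ k ∈ Finset.range N, segInt f (γ (s k)) (γ (s (k + 1))) := by
  have hdata : ∀ k < N, ∃ F : ℂ → ℂ,
      (∀ z ∈ Metric.ball (γ (s k)) r, HasDerivAt F (f z) z) ∧
      ContinuousOn f (Metric.ball (γ (s k)) r) := by
    intro k hk
    obtain ⟨F, hF⟩ := exists_primitive hr (hf.mono (hball k hk))
    exact ⟨F, hF, (hf.mono ((Metric.ball_subset_closedBall).trans (hball k hk))).continuousOn⟩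
  have hmaps : ∀ k < N, ∀ t ∈ Set.Icc (s k) (s (k + 1)), γ t ∈ Metric.ball (γ (s k)) r :=
    fun k hk t ht => Metric.mem_ball.mpr (hclose k hk t ht)
  have hint : ∀ k < N,
      IntervalIntegrable (fun t => f (γ t) * deriv γ t) MeasureTheory.volume (s k) (s (k + 1)) := by
    intro k hk
    obtain ⟨F, hF, hfc⟩ := hdata k hk
    exact pieceInt_integrable hfc (hslt k hk) (hC1 k hk) (hmaps k hk)
  have hsum := intervalIntegral.sum_integral_adjacent_intervals hint
  rw [hs0, hsN] at hsum
  rw [← hsum]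
  refine Finset.sum_congr rfl fun k hk => ?_
  rw [Finset.mem_range] at hk
  obtain ⟨F, hF, hfc⟩ := hdata k hk
  rw [pieceInt hF hfc (hslt k hk) (hC1 k hk) (hmaps k hk),
    segInt_eq_sub hF hfc (Metric.mem_ball_self hr)
      (hmaps k hk _ (Set.right_mem_Icc.mpr (hslt k hk).le))]

theorem cauchy_homotopic_paths (U : Set ℂ) (hU : IsOpen U)
    (K : Set ℂ) (hK : IsCompact K) (r : ℝ) (hr : 0 < r)
    (hKU : {z : ℂ | Metric.infDist z K ≤ r} ⊆ U)
    (γ₀ γ₁ : ℝ → ℂ)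
    (h₀ : PiecewiseC1On γ₀ 0 1) (h₁ : PiecewiseC1On γ₁ 0 1)
    (hc₀ : γ₀ 0 = γ₀ 1) (hc₁ : γ₁ 0 = γ₁ 1)
    (σ : ℝ × ℝ → ℂ) (hσ : ContinuousOn σ (Icc 0 1 ×ˢ Icc 0 1))
    (hσK : ∀ p ∈ Icc (0:ℝ) 1 ×ˢ Icc (0:ℝ) 1, σ p ∈ K)
    (hσ0 : ∀ x ∈ Icc (0:ℝ) 1, σ (0, x) = γ₀ x)
    (hσ1 : ∀ x ∈ Icc (0:ℝ) 1, σ (1, x) = γ₁ x)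
    (hσc : ∀ t ∈ Icc (0:ℝ) 1, σ (t, 0) = σ (t, 1))
    (f : ℂ → ℂ) (hf : DifferentiableOn ℂ f U) :
    ∫ t in (0:ℝ)..1, f (γ₀ t) * deriv γ₀ t = ∫ t in (0:ℝ)..1, f (γ₁ t) * deriv γ₁ t := by
  classical
  obtain ⟨hγ₀c, n₀, p₀, hn₀, hp₀0, hp₀1, hp₀lt, hp₀C1⟩ := h₀
  obtain ⟨hγ₁c, n₁, p₁, hn₁, hp₁0, hp₁1, hp₁lt, hp₁C1⟩ := h₁
  have hballU : ∀ z ∈ K, Metric.closedBall z r ⊆ U := fun z hz w hw =>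
    hKU (le_trans (Metric.infDist_le_dist_of_mem hz) (Metric.mem_closedBall.mp hw))
  set Q : Set (ℝ × ℝ) := Set.Icc (0:ℝ) 1 ×ˢ Set.Icc (0:ℝ) 1 with hQdef
  have hQc : IsCompact Q := isCompact_Icc.prod isCompact_Icc
  have huc : UniformContinuousOn σ Q := hQc.uniformContinuousOn_of_continuous hσ
  obtain ⟨δ, hδ0, hδ⟩ := (Metric.uniformContinuousOn_iff).mp huc (r/2) (by linarith)
  obtain ⟨m, hm0', hmδ⟩ : ∃ m : ℕ, 0 < m ∧ 1/(m:ℝ) < δ := by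
    obtain ⟨m', hm'⟩ := exists_nat_one_div_lt hδ0
    exact ⟨m' + 1, Nat.succ_pos _, by push_cast; exact hm'⟩
  have hm0 : (0:ℝ) < (m:ℝ) := by exact_mod_cast hm0'
  -- the partition set
  have hp₀mem : ∀ i ≤ n₀, p₀ i ∈ Set.Icc (0:ℝ) 1 := by
    intro i hi
    constructor
    · rw [← hp₀0]; exact part_mono hp₀lt 0 i (Nat.zero_le _) hi
    · rw [← hp₀1]; exact part_mono hp₀lt i n₀ hi le_rfl
  have hp₁mem : ∀ i ≤ n₁, p₁ i ∈ Set.Icc (0:ℝ) 1 := by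
    intro i hi
    constructor
    · rw [← hp₁0]; exact part_mono hp₁lt 0 i (Nat.zero_le _) hi
    · rw [← hp₁1]; exact part_mono hp₁lt i n₁ hi le_rfl
  set T : Finset ℝ := ((Finset.range (m+1)).image (fun k : ℕ => (k:ℝ)/(m:ℝ)))
      ∪ ((Finset.range (n₀+1)).image p₀) ∪ ((Finset.range (n₁+1)).image p₁) with hTdef
  have hTgrid : ∀ j ≤ m, ((j:ℝ)/(m:ℝ)) ∈ T := fun j hj => by
    simp only [hTdef, Finset.mem_union, Finset.mem_image, Finset.mem_range]
    exact Or.inl (Or.inl ⟨j, by omega, rfl⟩)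
  have hp₀T : ∀ i ≤ n₀, p₀ i ∈ T := fun i hi => by
    simp only [hTdef, Finset.mem_union, Finset.mem_image, Finset.mem_range]
    exact Or.inl (Or.inr ⟨i, by omega, rfl⟩)
  have hp₁T : ∀ i ≤ n₁, p₁ i ∈ T := fun i hi => by
    simp only [hTdef, Finset.mem_union, Finset.mem_image, Finset.mem_range]
    exact Or.inr ⟨i, by omega, rfl⟩
  have hT0 : (0:ℝ) ∈ T := by simpa using hTgrid 0 (Nat.zero_le _)
  have hT1 : (1:ℝ) ∈ T := by
    have := hTgrid m le_rfl
    rwa [div_self hm0.ne'] at this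
  have hTsub : ∀ x ∈ T, x ∈ Set.Icc (0:ℝ) 1 := by
    intro x hx
    simp only [hTdef, Finset.mem_union, Finset.mem_image, Finset.mem_range] at hx
    rcases hx with (⟨j, hj, rfl⟩ | ⟨i, hi, rfl⟩) | ⟨i, hi, rfl⟩
    · constructor
      · positivity
      · rw [div_le_one hm0]; exact_mod_cast Nat.lt_succ_iff.mp hj
    · exact hp₀mem i (by omega)
    · exact hp₁mem i (by omega)
  obtain ⟨N, s, hN0, hs0, hsN, hslt, hsmem, hsucc⟩ := exists_sorted_enum T hT0 hT1 hTsub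
  have hsIcc : ∀ k ≤ N, s k ∈ Set.Icc (0:ℝ) 1 := fun k hk => hTsub _ (hsmem k hk)
  -- gaps are small
  have hgap : ∀ k < N, s (k+1) - s k ≤ 1/(m:ℝ) := by
    intro k hk
    by_contra hcon
    push_neg at hcon
    have hk0 : (0:ℝ) ≤ s k := (hsIcc k hk.le).1
    set j : ℕ := Nat.floor ((m:ℝ) * s k) + 1 with hjdef
    have hfl := Nat.lt_floor_add_one ((m:ℝ) * s k)
    have hfl2 := Nat.floor_le (by positivity : (0:ℝ) ≤ (m:ℝ) * s k)
    have hx1 : s k < (j:ℝ)/(m:ℝ) := by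
      rw [lt_div_iff₀ hm0, hjdef]
      push_cast
      nlinarith
    have hx2 : (j:ℝ)/(m:ℝ) ≤ s k + 1/(m:ℝ) := by
      rw [div_le_iff₀ hm0, hjdef]
      push_cast
      have hexp : (s k + 1/(m:ℝ)) * (m:ℝ) = (m:ℝ) * s k + 1 := by
        field_simp
      rw [hexp]
      linarith
    have hxlt : (j:ℝ)/(m:ℝ) < s (k+1) := lt_of_le_of_lt hx2 (by linarith)
    have hj1 : (j:ℝ)/(m:ℝ) ≤ 1 := hxlt.le.trans (hsIcc (k+1) hk).2
    have hjm : j ≤ m := by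
      rw [div_le_one hm0] at hj1
      exact_mod_cast hj1
    exact absurd (hsucc _ (hTgrid j hjm) k hk hx1) (not_le.mpr hxlt)
  have hgapδ : ∀ k < N, s (k+1) - s k < δ := fun k hk => (hgap k hk).trans_lt hmδ
  -- containment in C¹ pieces
  have hcontain : ∀ (p : ℕ → ℝ) (n : ℕ), 0 < n → p 0 = 0 → p n = 1 →
      (∀ i < n, p i < p (i+1)) → (∀ i ≤ n, p i ∈ T) →
      ∀ k < N, ∃ i < n, p i ≤ s k ∧ s (k+1) ≤ p (i+1) := by
    intro p n hn hp0 hpn hplt hpT k hk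
    set P : ℕ → Prop := fun i => p i ≤ s k with hP
    have hP0 : P 0 := by rw [hP]; simp only [hp0]; exact (hsIcc k hk.le).1
    set i : ℕ := Nat.findGreatest P n with hidef
    have hPi : P i := Nat.findGreatest_spec (Nat.zero_le n) hP0
    have hin : i ≤ n := Nat.findGreatest_le n
    have hskb : s k < 1 := lt_of_lt_of_le (hslt k hk) (hsIcc (k+1) hk).2
    have hilt : i < n := by
      rcases Nat.lt_or_ge i n with h | h
      · exact h
      · exfalso
        have hin' : i = n := le_antisymm hin h
        rw [hP, hin', hpn] at hPi
        linarith
    have hnext : ¬ P (i+1) :=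
      Nat.findGreatest_is_greatest (Nat.lt_succ_self i) (by omega)
    exact ⟨i, hilt, hPi, hsucc _ (hpT (i+1) (by omega)) k hk (not_le.mp hnext)⟩
  have hC1₀ : ∀ k < N, ContDiffOn ℝ 1 γ₀ (Set.Icc (s k) (s (k+1))) := by
    intro k hk
    obtain ⟨i, hi, h1, h2⟩ := hcontain p₀ n₀ hn₀ hp₀0 hp₀1 hp₀lt hp₀T k hk
    exact (hp₀C1 i hi).mono (Set.Icc_subset_Icc h1 h2)
  have hC1₁ : ∀ k < N, ContDiffOn ℝ 1 γ₁ (Set.Icc (s k) (s (k+1))) := by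
    intro k hk
    obtain ⟨i, hi, h1, h2⟩ := hcontain p₁ n₁ hn₁ hp₁0 hp₁1 hp₁lt hp₁T k hk
    exact (hp₁C1 i hi).mono (Set.Icc_subset_Icc h1 h2)
  -- closeness of σ values
  have hσpair : ∀ a b : ℝ × ℝ, a ∈ Q → b ∈ Q → dist a.1 b.1 < δ → dist a.2 b.2 < δ →
      dist (σ a) (σ b) < r/2 := by
    intro a b ha hb h1 h2
    exact hδ a ha b hb (by rw [Prod.dist_eq]; exact max_lt h1 h2)
  -- grid values
  set v : ℕ → ℕ → ℂ := fun j k => σ ((j:ℝ)/(m:ℝ), s k) with hvdef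
  have hQmem : ∀ j ≤ m, ∀ k ≤ N, (((j:ℝ)/(m:ℝ), s k) : ℝ × ℝ) ∈ Q := by
    intro j hj k hk
    refine ⟨⟨by positivity, ?_⟩, hsIcc k hk⟩
    rw [div_le_one hm0]; exact_mod_cast hj
  have hvK : ∀ j ≤ m, ∀ k ≤ N, v j k ∈ K := fun j hj k hk => hσK _ (hQmem j hj k hk)
  -- the row sums
  set Jsum : ℕ → ℂ := fun j => ∑ k ∈ Finset.range N, segInt f (v j k) (v j (k+1))
    with hJdef
  -- side computation
  have hside : ∀ (γ : ℝ → ℂ) (j : ℕ), j ≤ m →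
      (∀ x ∈ Set.Icc (0:ℝ) 1, σ ((j:ℝ)/(m:ℝ), x) = γ x) →
      (∀ k < N, ContDiffOn ℝ 1 γ (Set.Icc (s k) (s (k+1)))) →
      ∫ t in (0:ℝ)..1, f (γ t) * deriv γ t = Jsum j := by
    intro γ j hj hσγ hC1
    have hγs : ∀ k ≤ N, γ (s k) = v j k := fun k hk => (hσγ _ (hsIcc k hk)).symm
    have hball : ∀ k < N, Metric.closedBall (γ (s k)) r ⊆ U := by
      intro k hk
      rw [hγs k hk.le]
      exact hballU _ (hvK j hj k hk.le)
    have hclose : ∀ k < N, ∀ t ∈ Set.Icc (s k) (s (k+1)), dist (γ t) (γ (s k)) < r := by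
      intro k hk t ht
      have htI : t ∈ Set.Icc (0:ℝ) 1 :=
        ⟨le_trans (hsIcc k hk.le).1 ht.1, le_trans ht.2 (hsIcc (k+1) hk).2⟩
      rw [← hσγ t htI, ← hσγ (s k) (hsIcc k hk.le)]
      have := hσpair ((j:ℝ)/(m:ℝ), t) ((j:ℝ)/(m:ℝ), s k)
        ⟨⟨by positivity, by rw [div_le_one hm0]; exact_mod_cast hj⟩, htI⟩
        (hQmem j hj k hk.le)
        (by simpa [dist_self] using hδ0)
        (by rw [Real.dist_eq, abs_of_nonneg (by linarith [ht.1])]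
            linarith [ht.2, hgapδ k hk])
      linarith
    rw [side_sum hf hr hs0 hsN hslt hC1 hball hclose]
    exact Finset.sum_congr rfl fun k hk => by
      rw [Finset.mem_range] at hk
      rw [hγs k hk.le, hγs (k+1) hk]
  -- heart: adjacent rows agree
  have hstep : ∀ j < m, Jsum j = Jsum (j+1) := by
    intro j hj
    set W : ℕ → ℂ := fun k => segInt f (v j k) (v (j+1) k) with hW
    -- memberships of the four corners
    have hdj : dist (((j+1:ℕ):ℝ)/(m:ℝ)) ((j:ℝ)/(m:ℝ)) < δ := by
      rw [Real.dist_eq]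
      have heq : ((j+1:ℕ):ℝ)/(m:ℝ) - (j:ℝ)/(m:ℝ) = 1/(m:ℝ) := by
        push_cast; field_simp; ring
      rw [heq, abs_of_nonneg (by positivity)]
      exact hmδ
    have hdj0 : ∀ j' : ℕ, dist ((j':ℝ)/(m:ℝ)) ((j':ℝ)/(m:ℝ)) < δ := fun _ => by
      simpa [dist_self] using hδ0
    have hJ : Jsum j - Jsum (j+1) = W 0 - W N := by
      have h1 : Jsum j - Jsum (j+1)
          = ∑ k ∈ Finset.range N, (segInt f (v j k) (v j (k+1))
              - segInt f (v (j+1) k) (v (j+1) (k+1))) := by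
        rw [hJdef, ← Finset.sum_sub_distrib]
      rw [h1, Finset.sum_congr rfl ?_, Finset.sum_range_sub' W N]
      intro k hkr
      rw [Finset.mem_range] at hkr
      have hcK : v j k ∈ K := hvK j hj.le k hkr.le
      obtain ⟨F, hF⟩ := exists_primitive hr (hf.mono (hballU _ hcK))
      have hfc : ContinuousOn f (Metric.ball (v j k) r) :=
        (hf.mono (Metric.ball_subset_closedBall.trans (hballU _ hcK))).continuousOn
      have hmem : ∀ j' ≤ m, ∀ k' ≤ N, dist ((j':ℝ)/(m:ℝ)) ((j:ℝ)/(m:ℝ)) < δ →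
          dist (s k') (s k) < δ → v j' k' ∈ Metric.ball (v j k) r := by
        intro j' hj' k' hk' h1 h2
        rw [Metric.mem_ball]
        have := hσpair ((j':ℝ)/(m:ℝ), s k') ((j:ℝ)/(m:ℝ), s k)
          (hQmem j' hj' k' hk') (hQmem j hj.le k hkr.le) h1 h2
        linarith
      have hdk1 : dist (s (k+1)) (s k) < δ := by
        rw [Real.dist_eq, abs_of_nonneg (by linarith [hslt k hkr])]
        linarith [hgapδ k hkr]
      have hdk0 : dist (s k) (s k) < δ := by simpa [dist_self] using hδ0
      have h00 : v j k ∈ Metric.ball (v j k) r := Metric.mem_ball_self hr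
      have h01 : v j (k+1) ∈ Metric.ball (v j k) r :=
        hmem j hj.le (k+1) hkr (hdj0 j) hdk1
      have h10 : v (j+1) k ∈ Metric.ball (v j k) r :=
        hmem (j+1) (by omega) k hkr.le hdj hdk0
      have h11 : v (j+1) (k+1) ∈ Metric.ball (v j k) r :=
        hmem (j+1) (by omega) (k+1) hkr hdj hdk1
      rw [segInt_eq_sub hF hfc h00 h01, segInt_eq_sub hF hfc h10 h11]
      have hw1 : W k = F (v (j+1) k) - F (v j k) := segInt_eq_sub hF hfc h00 h10
      have hw2 : W (k+1) = F (v (j+1) (k+1)) - F (v j (k+1)) := segInt_eq_sub hF hfc h01 h11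
      rw [hw1, hw2]
      ring
    have hWend : W 0 = W N := by
      have hmemj : ∀ j' : ℕ, j' ≤ m → ((j':ℝ)/(m:ℝ)) ∈ Set.Icc (0:ℝ) 1 := by
        intro j' hj'
        exact ⟨by positivity, by rw [div_le_one hm0]; exact_mod_cast hj'⟩
      have h1 : v j 0 = v j N := by
        show σ ((j:ℝ)/(m:ℝ), s 0) = σ ((j:ℝ)/(m:ℝ), s N)
        rw [hs0, hsN]
        exact hσc _ (hmemj j hj.le)
      have h2 : v (j+1) 0 = v (j+1) N := by
        show σ (((j+1:ℕ):ℝ)/(m:ℝ), s 0) = σ (((j+1:ℕ):ℝ)/(m:ℝ), s N)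
        rw [hs0, hsN]
        exact hσc _ (hmemj (j+1) (by omega))
      show segInt f (v j 0) (v (j+1) 0) = segInt f (v j N) (v (j+1) N)
      rw [h1, h2]
    have : Jsum j - Jsum (j+1) = 0 := by rw [hJ, hWend, sub_self]
    exact sub_eq_zero.mp this
  have hall : ∀ j, j ≤ m → Jsum 0 = Jsum j := by
    intro j
    induction j with
    | zero => intro _; rfl
    | succ j ih =>
      intro hj
      rw [ih (by omega), hstep j (by omega)]
  have hA := hside γ₀ 0 (Nat.zero_le m)
    (fun x hx => by rw [Nat.cast_zero, zero_div]; exact hσ0 x hx) hC1₀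
  have hB := hside γ₁ m le_rfl
    (fun x hx => by rw [div_self hm0.ne']; exact hσ1 x hx) hC1₁
  rw [hA, hB, ← hall m le_rfl]
end
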